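/- Let G be a finite non-nilpotent group and let N be the intersection of the normalizers of all non-normal Sylow subgroups of G. Then every Sylow subgroup of N is normal in G. -/

import Mathlib

open Subgroup

theorem stmt2 {G : Type*} [Group G] [Fintype G] (hG : ¬ Group.IsNilpotent G)
    (N : Subgroup G)
    (hN : N = sInf {H : Subgroup G | ∃ (p : ℕ), p.Prime ∧ ∃ P : Sylow p G,
          ¬ (P : Subgroup G).Normal ∧ H = Subgroup.normalizer ((P : Subgroup G) : Set G)}) :
    ∀ (p : ℕ), p.Prime → ∀ P : Sylow p ↥N,
      ((P : Subgroup ↥N).map N.subtype).Normal := by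
  intro p hp Q
  haveI : Fact p.Prime := ⟨hp⟩
  -- N is normal in G
  haveI hNnormal : N.Normal := by
    constructor
    intro x hx g
    rw [hN, Subgroup.mem_sInf]
    rintro H ⟨q, hq, P'', hP''not, rfl⟩
    haveI : Fact q.Prime := ⟨hq⟩
    set P₀ : Sylow q G := g⁻¹ • P'' with hP₀
    have hP₀not : ¬ (P₀ : Subgroup G).Normal := by
      intro h
      apply hP''not
      haveI : (P₀ : Subgroup G).Normal := h
      have : g • P₀ = P₀ := Sylow.smul_eq_of_normal
      rw [hP₀, smul_inv_smul] at this
      rw [this]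
      exact h
    have hxP₀ : x ∈ Subgroup.normalizer ((P₀ : Subgroup G) : Set G) := by
      rw [hN] at hx
      exact Subgroup.mem_sInf.mp hx _ ⟨q, hq, P₀, hP₀not, rfl⟩
    change x ∈ Subgroup.normalizer (P₀ : Set G) at hxP₀
    show g * x * g⁻¹ ∈ Subgroup.normalizer (P'' : Set G)
    rw [← Sylow.smul_eq_iff_mem_normalizer] at hxP₀ ⊢
    rw [hP₀] at hxP₀
    have := congrArg (g • ·) hxP₀
    simpa [smul_smul, mul_assoc] using this
  -- Q.map N.subtype is a p-group contained in some Sylow p-subgroup P' of G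
  have hpmap : IsPGroup p ((Q : Subgroup ↥N).map N.subtype) := Q.isPGroup'.map _
  obtain ⟨P', hle⟩ := hpmap.exists_le_sylow
  -- every element of N normalizes P'
  have hnorm : ∀ n ∈ N, n ∈ Subgroup.normalizer ((P' : Subgroup G) : Set G) := by
    intro n hn
    by_cases hP' : (P' : Subgroup G).Normal
    · rw [Subgroup.normalizer_eq_top_iff.mpr hP']; trivial
    · rw [hN] at hn
      exact Subgroup.mem_sInf.mp hn _ ⟨p, hp, P', hP', rfl⟩
  -- Q.map N.subtype = P' ⊓ N
  have hkey : (Q : Subgroup ↥N).map N.subtype = (P' : Subgroup G) ⊓ N := by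
    have h1 : (Q : Subgroup ↥N) ≤ ((P' : Subgroup G) ⊓ N).subgroupOf N := by
      intro x hx
      simp only [Subgroup.mem_subgroupOf, Subgroup.mem_inf]
      exact ⟨hle ⟨x, hx, rfl⟩, x.2⟩
    have h2 : IsPGroup p (((P' : Subgroup G) ⊓ N).subgroupOf N) :=
      (P'.isPGroup'.to_inf_left).comap_subtype
    have h3 := Q.3 h2 h1
    rw [← h3, Subgroup.subgroupOf_map_subtype, inf_assoc, inf_idem]
  -- Q is normal in N
  haveI hQnormal : (Q : Subgroup ↥N).Normal := by
    constructor
    intro q hq n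
    have hmem : ((n * q * n⁻¹ : ↥N) : G) ∈ (Q : Subgroup ↥N).map N.subtype := by
      rw [hkey]
      refine ⟨?_, (n * q * n⁻¹ : ↥N).2⟩
      have hqP' : (q : G) ∈ (P' : Subgroup G) := by
        have : (q : G) ∈ (Q : Subgroup ↥N).map N.subtype := ⟨q, hq, rfl⟩
        exact (hkey ▸ this).1
      have := (Subgroup.mem_normalizer_iff.mp (hnorm n n.2) (q : G)).mp hqP'
      exact this
    obtain ⟨y, hy, hy2⟩ := hmem
    have : y = n * q * n⁻¹ := Subtype.ext hy2
    rwa [← this]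
  haveI := Sylow.characteristic_of_normal Q hQnormal
  exact ConjAct.normal_of_characteristic_of_normal
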